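/- arXiv:0902.0068 — 7 statements merged into one kernel-verified Lean document; each statement's English description precedes it below -/
import Mathlib

section
/- Let G be a lcsc group acting properly (in the measurable sense) on a Borel space S. Then for every s ∈ S and every g in the stabilizer G_{s,s} = {g : g·s = s}, the modular function satisfies Δ(g) = 1. -/
open MeasureTheory ENNReal

/-- If a lcsc group `G` acts properly (in the measurable sense) on a Borel space `S`,
then the modular function `Δ` equals `1` on every stabilizer `G_{s,s} = {g : g·s = s}`. -/
theorem stmt_2 {G S : Type*} [Group G] [TopologicalSpace G] [IsTopologicalGroup G]
    [LocallyCompactSpace G] [SecondCountableTopology G] [T2Space G]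
    [MeasurableSpace G] [BorelSpace G]
    [MeasurableSpace S] [StandardBorelSpace S] [MulAction G S]
    (hact : Measurable fun p : G × S => p.1 • p.2)
    (lam : Measure G) [lam.IsHaarMeasure]
    (Δ : G → ℝ≥0∞) (hΔpos : ∀ g, Δ g ≠ 0 ∧ Δ g ≠ ⊤)
    (hΔ : ∀ (h : G) (f : G → ℝ≥0∞), Measurable f →
      ∫⁻ g', f (g' * h) ∂lam = Δ h⁻¹ * ∫⁻ g', f g' ∂lam)
    -- properness: a measurable `k : S → (0,∞)` with `μ_s k < ∞` for all `s`
    (k : S → ℝ≥0∞) (hk : Measurable k) (hkpos : ∀ t, 0 < k t ∧ k t < ⊤)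
    (hkfin : ∀ s : S, ∫⁻ g', k (g' • s) ∂lam < ⊤) :
    ∀ (s : S) (g : G), g • s = s → Δ g = 1 := by
  have key : ∀ (s : S) (g : G), g • s = s → Δ g⁻¹ = 1 := by
    intro s g hg
    have hm : Measurable fun g' : G => k (g' • s) :=
      hk.comp (hact.comp (measurable_id.prodMk measurable_const))
    have heq := hΔ g _ hm
    have hrw : (fun g' : G => k ((g' * g) • s)) = fun g' : G => k (g' • s) := by
      funext g'
      rw [mul_smul, hg]
    rw [show (∫⁻ g', k ((g' * g) • s) ∂lam) = ∫⁻ g', k (g' • s) ∂lam from by rw [hrw]]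
      at heq
    have hIpos : 0 < ∫⁻ g', k (g' • s) ∂lam := by
      rw [lintegral_pos_iff_support hm]
      have : Function.support (fun g' : G => k (g' • s)) = Set.univ := by
        ext g'; simp [Function.support, (hkpos (g' • s)).1.ne']
      rw [this]
      exact isOpen_univ.measure_pos lam ⟨1, trivial⟩
    have hIfin := hkfin s
    nth_rewrite 1 [show (∫⁻ g', k (g' • s) ∂lam) = 1 * ∫⁻ g', k (g' • s) ∂lam from
      (one_mul _).symm] at heq
    exact ((ENNReal.mul_left_inj hIpos.ne' hIfin.ne).mp heq).symm
  intro s g hg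
  have hg' : g⁻¹ • s = s := by
    rw [← hg, inv_smul_smul, hg]
  have := key s g⁻¹ hg'
  rwa [inv_inv] at this
end

section
/- Let G be a lcsc group acting measurably on a countable set S. The action is proper (i.e., the family μ_s = λ ∘ π_s⁻¹, s ∈ S, is uniformly σ-finite) if and only if 0 < λ(G_{s,s}) < ∞ for all s ∈ S, where G_{s,s} is the stabilizer of s. -/
open MeasureTheory ENNReal

section Aux

variable {G S : Type*} [Group G] [MeasurableSpace G] [MeasurableMul G]
    [Countable S] [MeasurableSpace S] [MeasurableSingletonClass S] [MulAction G S]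

omit [Countable S] [MeasurableSpace S] [MeasurableSingletonClass S] in
/-- Each nonempty fiber `{g | g • s = t}` has the same measure as the stabilizer. -/
lemma fiber_measure_eq (lam : Measure G) [lam.IsMulLeftInvariant]
    {s t : S} {g₀ : G} (h : g₀ • s = t) :
    lam {g : G | g • s = t} = lam {g : G | g • s = s} := by
  have hset : {g : G | g • s = t} = (fun g => g₀⁻¹ * g) ⁻¹' {g : G | g • s = s} := by
    ext g
    simp only [Set.mem_preimage, Set.mem_setOf_eq, mul_smul, inv_smul_eq_iff, h]
  rw [hset, measure_preimage_mul]

end Aux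

/-- A lcsc group `G` acting measurably on a countable set `S` acts properly (there is a
measurable `k : S → (0,∞)` with `μ_s k < ∞` for all `s`) if and only if
`0 < λ(G_{s,s}) < ∞` for all `s ∈ S`. -/
theorem stmt_4 {G S : Type*} [Group G] [TopologicalSpace G] [IsTopologicalGroup G]
    [LocallyCompactSpace G] [SecondCountableTopology G] [T2Space G]
    [MeasurableSpace G] [BorelSpace G]
    [Countable S] [MeasurableSpace S] [MeasurableSingletonClass S] [MulAction G S]
    (hact : Measurable fun p : G × S => p.1 • p.2)
    (lam : Measure G) [lam.IsHaarMeasure] :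
    (∃ k : S → ℝ≥0∞, Measurable k ∧ (∀ t, 0 < k t ∧ k t < ⊤) ∧
        ∀ s : S, ∫⁻ g, k (g • s) ∂lam < ⊤)
      ↔ ∀ s : S, 0 < lam {g : G | g • s = s} ∧ lam {g : G | g • s = s} < ⊤ := by
  have hms : ∀ s : S, Measurable fun g : G => g • s := fun s =>
    hact.comp (measurable_id.prodMk measurable_const)
  have hA : ∀ s t : S, MeasurableSet {g : G | g • s = t} := fun s t =>
    (hms s) (measurableSet_singleton t)
  -- positivity of the stabilizer measure holds unconditionally
  have hpos : ∀ s : S, 0 < lam {g : G | g • s = s} := by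
    intro s
    by_contra h
    push_neg at h
    have h0 : lam {g : G | g • s = s} = 0 := le_antisymm h (zero_le)
    have hcover : (Set.univ : Set G) ⊆ ⋃ t : S, {g : G | g • s = t} := by
      intro g _
      exact Set.mem_iUnion.2 ⟨g • s, rfl⟩
    have hle : lam (Set.univ : Set G) ≤ ∑' t : S, lam {g : G | g • s = t} :=
      (measure_mono hcover).trans (measure_iUnion_le _)
    have hzero : ∀ t : S, lam {g : G | g • s = t} = 0 := by
      intro t
      rcases Set.eq_empty_or_nonempty {g : G | g • s = t} with he | ⟨g₀, hg₀⟩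
      · simp [he]
      · rw [fiber_measure_eq lam hg₀]; exact h0
    rw [tsum_congr hzero, tsum_zero] at hle
    have : lam (Set.univ : Set G) = 0 := le_antisymm hle (zero_le)
    exact (isOpen_univ.measure_pos lam ⟨1, trivial⟩).ne' this
  constructor
  · rintro ⟨k, -, hkpos, hkint⟩ s
    refine ⟨hpos s, ?_⟩
    have hle : k s * lam {g : G | g • s = s} ≤ ∫⁻ g, k (g • s) ∂lam := by
      have : k s * lam {g : G | g • s = s}
          = ∫⁻ g in {g : G | g • s = s}, k (g • s) ∂lam := by
        rw [setLIntegral_congr_fun (hA s s)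
          (fun g (hg : g • s = s) => by rw [hg])]
        rw [setLIntegral_const, mul_comm]
      rw [this]
      exact setLIntegral_le_lintegral _ _
    have hlt : k s * lam {g : G | g • s = s} < ⊤ := lt_of_le_of_lt hle (hkint s)
    by_contra htop
    push_neg at htop
    have : lam {g : G | g • s = s} = ⊤ := top_le_iff.mp htop
    rw [this, ENNReal.mul_top (hkpos s).1.ne'] at hlt
    exact absurd hlt (lt_irrefl _)
  · intro hfin
    obtain ⟨e, he⟩ := exists_injective_nat S
    refine ⟨fun t => (2 : ℝ≥0∞)⁻¹ ^ (e t), measurable_of_countable _, ?_, ?_⟩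
    · intro t
      constructor
      · exact ENNReal.pow_pos (by simp) _
      · exact lt_of_le_of_lt (pow_le_one' (by simp [ENNReal.inv_le_one]) _) (by simp)
    · intro s
      set k : S → ℝ≥0∞ := fun t => (2 : ℝ≥0∞)⁻¹ ^ (e t) with hk
      have hksum : ∑' t : S, k t < ⊤ := by
        have h1 : ∑' t : S, k t ≤ ∑' n : ℕ, (2 : ℝ≥0∞)⁻¹ ^ n :=
          ENNReal.tsum_comp_le_tsum_of_injective he _
        have h2 : ∑' n : ℕ, (2 : ℝ≥0∞)⁻¹ ^ n = (1 - 2⁻¹)⁻¹ := ENNReal.tsum_geometric _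
        refine lt_of_le_of_lt (h1.trans h2.le) ?_
        rw [ENNReal.one_sub_inv_two]
        simp
      -- rewrite the integral as a sum over fibers
      have hrepr : (∫⁻ g, k (g • s) ∂lam) = ∑' t : S, k t * lam {g : G | g • s = t} := by
        have hpt : ∀ g : G, k (g • s)
            = ∑' t : S, Set.indicator {g' : G | g' • s = t} (fun _ => k t) g := by
          intro g
          rw [tsum_eq_single (g • s) (by
            intro t ht
            exact Set.indicator_of_notMem (fun hg => ht (by exact hg.symm ▸ rfl)) _)]
          exact (Set.indicator_of_mem rfl _).symm
        calc (∫⁻ g, k (g • s) ∂lam)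
            = ∫⁻ g, ∑' t : S, Set.indicator {g' : G | g' • s = t} (fun _ => k t) g ∂lam :=
              lintegral_congr hpt
          _ = ∑' t : S, ∫⁻ g, Set.indicator {g' : G | g' • s = t} (fun _ => k t) g ∂lam :=
              lintegral_tsum (fun t => ((measurable_const).indicator (hA s t)).aemeasurable)
          _ = ∑' t : S, k t * lam {g : G | g • s = t} := by
              refine tsum_congr fun t => ?_
              exact lintegral_indicator_const (hA s t) (k t)
      rw [hrepr]
      have hbound : ∀ t : S, k t * lam {g : G | g • s = t}
          ≤ k t * lam {g : G | g • s = s} := by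
        intro t
        rcases Set.eq_empty_or_nonempty {g : G | g • s = t} with he' | ⟨g₀, hg₀⟩
        · simp [he']
        · rw [fiber_measure_eq lam hg₀]
      refine lt_of_le_of_lt (ENNReal.tsum_le_tsum hbound) ?_
      rw [ENNReal.tsum_mul_right]
      exact ENNReal.mul_lt_top hksum (hfin s).2
end

section
/- Let G be a lcsc group acting properly on a Borel space S such that every stabilizer G_{s,s} is locally closed (the intersection of an open and a closed set) in G. Then every stabilizer G_{s,s} is compact. -/
open MeasureTheory ENNReal
open scoped Pointwise

/-- If a lcsc group `G` acts properly on a Borel space `S` and every stabilizer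
`G_{s,s}` is locally closed (intersection of an open and a closed set) in `G`,
then every stabilizer is compact. -/
theorem stmt_8 {G S : Type*} [Group G] [TopologicalSpace G] [IsTopologicalGroup G]
    [LocallyCompactSpace G] [SecondCountableTopology G] [T2Space G]
    [MeasurableSpace G] [BorelSpace G]
    [MeasurableSpace S] [StandardBorelSpace S] [MulAction G S]
    (hact : Measurable fun p : G × S => p.1 • p.2)
    (lam : Measure G) [lam.IsHaarMeasure]
    -- properness
    (k : S → ℝ≥0∞) (hk : Measurable k) (hkpos : ∀ t, 0 < k t ∧ k t < ⊤)
    (hkfin : ∀ s : S, ∫⁻ g, k (g • s) ∂lam < ⊤)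
    (hlc : ∀ s : S, ∃ (U C : Set G), IsOpen U ∧ IsClosed C ∧
      {g : G | g • s = s} = U ∩ C) :
    ∀ s : S, IsCompact {g : G | g • s = s} := by
  intro s
  set H : Set G := {g : G | g • s = s} with hHdef
  have hone : (1 : G) ∈ H := one_smul G s
  have hmul : ∀ {a b : G}, a ∈ H → b ∈ H → a * b ∈ H := by
    intro a b ha hb
    show (a * b) • s = s
    rw [mul_smul, hb, ha]
  have hinv : ∀ {a : G}, a ∈ H → a⁻¹ ∈ H := by
    intro a ha
    show a⁻¹ • s = s
    have : a⁻¹ • (a • s) = a⁻¹ • s := by rw [ha]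
    rwa [inv_smul_smul, eq_comm] at this
  -- `H` coincides with the stabilizer subgroup
  have hHs : ((MulAction.stabilizer G s : Subgroup G) : Set G) = H := by
    ext g; exact MulAction.mem_stabilizer_iff
  -- `H` is closed, being a locally closed subgroup
  obtain ⟨U, C, hU, hC, hUC⟩ := hlc s
  rw [← hHdef] at hUC
  have hclosureC : closure H ⊆ C :=
    closure_minimal (by rw [hUC]; exact Set.inter_subset_right) hC
  have hclosed : IsClosed H := by
    apply isClosed_of_closure_subset
    intro x hx
    have heU : (1 : G) ∈ U := by
      have := hone; rw [hUC] at this; exact this.1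
    have hxU : IsOpen ((x * ·) '' U) := (isOpenMap_mul_left x) U hU
    have hxmem : x ∈ (x * ·) '' U := ⟨1, heU, mul_one x⟩
    obtain ⟨h', hh'U, hh'H⟩ :=
      (mem_closure_iff.mp hx _ hxU hxmem)
    obtain ⟨v, hvU, hveq⟩ := hh'U
    -- closure of the stabilizer subgroup
    have hxcl : x ∈ (MulAction.stabilizer G s).topologicalClosure := by
      show x ∈ closure ((MulAction.stabilizer G s : Subgroup G) : Set G)
      rw [hHs]; exact hx
    have hh'cl : h' ∈ (MulAction.stabilizer G s).topologicalClosure := by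
      show h' ∈ closure ((MulAction.stabilizer G s : Subgroup G) : Set G)
      rw [hHs]; exact subset_closure hh'H
    have hvcl : v ∈ (MulAction.stabilizer G s).topologicalClosure := by
      have : x⁻¹ * h' ∈ (MulAction.stabilizer G s).topologicalClosure :=
        mul_mem (inv_mem hxcl) hh'cl
      have hveq' : v = x⁻¹ * h' := by
        rw [← hveq]; group
      rwa [hveq']
    have hvH : v ∈ H := by
      rw [hUC]
      refine ⟨hvU, hclosureC ?_⟩
      have : v ∈ closure ((MulAction.stabilizer G s : Subgroup G) : Set G) := hvcl
      rwa [hHs] at this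
    have hxeq : x = h' * v⁻¹ := by rw [← hveq]; group
    rw [hxeq]
    exact hmul hh'H (hinv hvH)
  -- the function f
  set f : G → ℝ≥0∞ := fun g => k (g • s) with hfdef
  have hf : Measurable f :=
    hk.comp (hact.comp (measurable_id.prodMk measurable_const))
  have hfpos : ∀ g, 0 < f g := fun g => (hkpos _).1
  have hffin : ∀ g, f g < ⊤ := fun g => (hkpos _).2
  have hIfin : ∫⁻ g, f g ∂lam < ⊤ := hkfin s
  have hIpos : 0 < ∫⁻ g, f g ∂lam := by
    rw [lintegral_pos_iff_support hf]
    have : Function.support f = Set.univ := by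
      ext g; simp [Function.mem_support, (hfpos g).ne']
    rw [this]
    exact isOpen_univ.measure_pos lam ⟨1, trivial⟩
  have hinvf : ∀ (g : G), ∀ h ∈ H, f (g * h) = f g := by
    intro g h hh
    show k ((g * h) • s) = k (g • s)
    rw [mul_smul, hh]
  -- right translations by elements of H preserve lam
  have hmap : ∀ h ∈ H, Measure.map (· * h) lam = lam := by
    intro h hh
    have h1 : Measure.map (· * h) lam
        = Measure.haarScalarFactor (Measure.map (· * h) lam) lam • lam :=
      Measure.isMulLeftInvariant_eq_smul _ _
    set c : NNReal := Measure.haarScalarFactor (Measure.map (· * h) lam) lam with hc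
    have h2 : ∫⁻ g, f g ∂(Measure.map (· * h) lam) = ∫⁻ g, f g ∂lam := by
      rw [lintegral_map hf (measurable_mul_const h)]
      simp only [hinvf _ h hh]
    have hsm : (c • lam : Measure G) = ((c : ℝ≥0∞) • lam : Measure G) := by
      ext A hA
      simp only [Measure.smul_apply, ENNReal.smul_def, smul_eq_mul]
    have h3 : ∫⁻ g, f g ∂((c : NNReal) • lam) = (c : ℝ≥0∞) * ∫⁻ g, f g ∂lam := by
      rw [hsm, lintegral_smul_measure, smul_eq_mul]
    rw [h1, h3] at h2
    have hc1 : (c : ℝ≥0∞) = 1 := by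
      have h4 : (c : ℝ≥0∞) * (∫⁻ g, f g ∂lam) = 1 * ∫⁻ g, f g ∂lam := by
        rw [one_mul]; exact h2
      exact (ENNReal.mul_left_inj hIpos.ne' hIfin.ne).mp h4
    have hcc : c = 1 := by exact_mod_cast hc1
    rw [h1, hcc, one_smul]
  have htrans : ∀ (A : Set G), MeasurableSet A → ∀ h ∈ H, lam (A * ({h} : Set G)) = lam A := by
    intro A hA h hh
    have himg : A * {h} = (fun x => x * h⁻¹) ⁻¹' A := by
      ext x
      simp only [Set.mul_singleton, Set.mem_image, Set.mem_preimage]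
      constructor
      · rintro ⟨a, haA, rfl⟩; simpa using haA
      · intro hx; exact ⟨x * h⁻¹, hx, by group⟩
    rw [himg, ← Measure.map_apply (measurable_mul_const h⁻¹) hA,
      hmap h⁻¹ (hinv hh)]
  -- main argument
  by_contra hnc
  have hex : ∀ C' : Set G, IsCompact C' → ∃ g, g ∈ H ∧ g ∉ C' := by
    intro C' hC'
    by_contra hcon
    push_neg at hcon
    exact hnc (hC'.of_isClosed_subset hclosed hcon)
  -- a level set of f with positive finite measure
  obtain ⟨n, hn⟩ : ∃ n : ℕ, 0 < lam {g | ((n : ℝ≥0∞) + 1)⁻¹ ≤ f g} := by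
    by_contra hcon
    push_neg at hcon
    have hnull : lam (⋃ n : ℕ, {g | ((n : ℝ≥0∞) + 1)⁻¹ ≤ f g}) = 0 :=
      measure_iUnion_null fun n => le_antisymm (hcon n) zero_le
    have huniv : (⋃ n : ℕ, {g | ((n : ℝ≥0∞) + 1)⁻¹ ≤ f g}) = Set.univ := by
      ext g
      simp only [Set.mem_iUnion, Set.mem_setOf_eq, Set.mem_univ, iff_true]
      obtain ⟨m, hm⟩ := ENNReal.exists_inv_nat_lt (hfpos g).ne'
      exact ⟨m, le_trans (ENNReal.inv_le_inv.mpr (le_add_of_le_of_nonneg le_rfl zero_le_one)) hm.le⟩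
    rw [huniv] at hnull
    exact absurd hnull (isOpen_univ.measure_pos lam ⟨1, trivial⟩).ne'
  set ε : ℝ≥0∞ := ((n : ℝ≥0∞) + 1)⁻¹ with hεdef
  have hε0 : ε ≠ 0 := by simp [hεdef]
  set W : Set G := {g | ε ≤ f g} with hWdef
  have hWm : MeasurableSet W := measurableSet_le measurable_const hf
  have hWpos : 0 < lam W := hn
  have hWfin : lam W < ⊤ := by
    by_contra hcon
    push_neg at hcon
    have h1 : ε * lam W ≤ ∫⁻ g, f g ∂lam := mul_meas_ge_le_lintegral hf ε
    rw [top_le_iff.mp hcon, ENNReal.mul_top hε0] at h1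
    exact absurd (top_le_iff.mp h1) hIfin.ne
  have hWH : ∀ g ∈ W, ∀ h ∈ H, g * h ∈ W := by
    intro g hg h hh
    show ε ≤ f (g * h)
    rw [hinvf g h hh]; exact hg
  -- a compact subset of W with positive measure
  obtain ⟨K, hKW, hKc, hKpos⟩ := hWm.exists_lt_isCompact hWpos
  -- construct infinitely many disjoint right translates of K inside W
  have hKQ : ∀ l : List G, IsCompact ((K⁻¹ * K) * {x | x ∈ l}) :=
    fun l => (hKc.inv.mul hKc).mul l.finite_toSet.isCompact
  let pick : List G → G := fun l => Classical.choose (hex _ (hKQ l))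
  have hpickH : ∀ l, pick l ∈ H := fun l => (Classical.choose_spec (hex _ (hKQ l))).1
  have hpickN : ∀ l, pick l ∉ (K⁻¹ * K) * {x | x ∈ l} :=
    fun l => (Classical.choose_spec (hex _ (hKQ l))).2
  let L : ℕ → List G := fun n => Nat.rec [] (fun _ l => pick l :: l) n
  let u : ℕ → G := fun n => pick (L n)
  have hLs : ∀ n, L (n + 1) = u n :: L n := fun n => rfl
  have humem : ∀ m n, m < n → u m ∈ L n := by
    intro m n
    induction n with
    | zero => intro h; exact absurd h (Nat.not_lt_zero m)
    | succ n ih =>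
      intro h
      rw [hLs]
      rcases Nat.lt_succ_iff_lt_or_eq.mp h with h' | h'
      · exact List.mem_cons_of_mem _ (ih h')
      · rw [h']; exact List.mem_cons_self
  have hdis : Pairwise (Function.onFun Disjoint fun n => K * {u n}) := by
    have key : ∀ m n, m < n → Disjoint (K * {u m}) (K * {u n}) := by
      intro m n hmn
      rw [Set.disjoint_left]
      rintro x hxm hxn
      obtain ⟨a, haK, a', ha', rfl⟩ := hxm
      obtain ⟨b, hbK, b', hb', hx⟩ := hxn
      rw [Set.mem_singleton_iff] at ha' hb'
      subst ha'; subst hb'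
      have h9 : b⁻¹ * (b * u n) = b⁻¹ * (a * u m) := by
        simpa using congrArg (b⁻¹ * ·) hx
      have : u n = (b⁻¹ * a) * u m := by
        rw [mul_assoc]
        calc u n = b⁻¹ * (b * u n) := by group
          _ = b⁻¹ * (a * u m) := h9
      apply hpickN (L n)
      show pick (L n) ∈ (K⁻¹ * K) * {x | x ∈ L n}
      have hu : (u n : G) ∈ (K⁻¹ * K) * {x | x ∈ L n} := by
        rw [this]
        exact Set.mul_mem_mul (Set.mul_mem_mul (Set.inv_mem_inv.mpr hbK) haK)
          (humem m n hmn)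
      exact hu
    intro m n hmn
    rcases lt_or_gt_of_ne hmn with h | h
    · exact key m n h
    · exact (key n m h).symm
  have hKmeas : ∀ n : ℕ, MeasurableSet (K * {u n}) :=
    fun n => ((hKc.mul isCompact_singleton).isClosed).measurableSet
  have hsub : (⋃ n : ℕ, K * {u n}) ⊆ W := by
    rintro x ⟨_, ⟨n, rfl⟩, hx⟩
    obtain ⟨a, haK, a', ha', rfl⟩ := hx
    rw [Set.mem_singleton_iff] at ha'
    subst ha'
    exact hWH a (hKW haK) (u n) (hpickH (L n))
  have hsum : lam (⋃ n : ℕ, K * {u n}) = ∑' n : ℕ, lam (K * {u n}) :=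
    measure_iUnion hdis hKmeas
  have heach : ∀ n : ℕ, lam (K * {u n}) = lam K :=
    fun n => htrans K hKc.isClosed.measurableSet (u n) (hpickH (L n))
  have htop : lam (⋃ n : ℕ, K * {u n}) = ⊤ := by
    rw [hsum]
    simp only [heach]
    exact ENNReal.tsum_const_eq_top_of_ne_zero hKpos.ne'
  have : lam W = ⊤ := top_le_iff.mp (htop ▸ measure_mono hsub)
  exact absurd this hWfin.ne
end

section
/- Let G be a lcsc group acting transitively and properly on a Borel space S with a point c ∈ S whose stabilizer is compact. If ν is any σ-finite G-invariant measure on S, then ν is a constant multiple of μ_c = λ ∘ π_c⁻¹. -/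
open MeasureTheory ENNReal

/-- Key lemma: for any s-finite invariant measure `ρ` on `S`, and any measurable
finite-valued `f`, the integral of `f` against `ρ` factors as a "universal" integral over
the group times `∫ k dρ`. -/
lemma stmt_10_aux {G S : Type*} [Group G] [TopologicalSpace G] [IsTopologicalGroup G]
    [LocallyCompactSpace G] [SecondCountableTopology G] [T2Space G]
    [MeasurableSpace G] [BorelSpace G]
    [MeasurableSpace S] [MulAction G S]
    (hact : Measurable fun p : G × S => p.1 • p.2)
    (lam : Measure G) [lam.IsHaarMeasure]
    (htrans : ∀ s t : S, ∃ g : G, g • s = t)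
    (k : S → ℝ≥0∞) (hk : Measurable k) (hkpos : ∀ t, 0 < k t ∧ k t < ⊤)
    (hkfin : ∀ s : S, ∫⁻ g, k (g • s) ∂lam < ⊤)
    (c : S)
    (ρ : Measure S) [SFinite ρ]
    (hρ : ∀ g : G, Measure.map (fun t : S => g • t) ρ = ρ)
    (f : S → ℝ≥0∞) (hf : Measurable f) (hffin : ∀ s, f s ≠ ⊤) :
    ∫⁻ s, f s ∂ρ =
      (∫⁻ g, f (g⁻¹ • c) * (∫⁻ g', k (g' • g⁻¹ • c) ∂lam)⁻¹ ∂lam) * ∫⁻ s, k s ∂ρ := by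
  -- the "averaging" function K
  set K : S → ℝ≥0∞ := fun s => ∫⁻ g, k (g • s) ∂lam with hKdef
  have hKmeas : Measurable K := by
    have : Measurable fun p : S × G => k (p.2 • p.1) :=
      hk.comp (hact.comp measurable_swap)
    exact this.lintegral_prod_right'
  have hKfin : ∀ s, K s ≠ ⊤ := fun s => (hkfin s).ne
  have hKpos : ∀ s, K s ≠ 0 := by
    intro s
    have hmeas : Measurable fun g : G => k (g • s) :=
      hk.comp (hact.comp measurable_prodMk_right)
    have : 0 < ∫⁻ g, k (g • s) ∂lam := by
      rw [lintegral_pos_iff_support hmeas]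
      have : Function.support (fun g : G => k (g • s)) = Set.univ := by
        ext g; simp [Function.mem_support, (hkpos (g • s)).1.ne']
      rw [this]
      exact IsOpen.measure_pos lam isOpen_univ Set.univ_nonempty
    exact this.ne'
  -- measurability of auxiliary functions
  have hsmul : ∀ g : G, Measurable fun t : S => g • t := fun g =>
    hact.comp (measurable_const.prodMk measurable_id)
  have hinvsmul : Measurable fun p : G × S => p.1⁻¹ • p.2 :=
    hact.comp ((measurable_fst.inv).prodMk measurable_snd)
  have hF : Measurable fun s => f s * (K s)⁻¹ := hf.mul hKmeas.inv
  have hFfin : ∀ s, f s * (K s)⁻¹ ≠ ⊤ := fun s =>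
    ENNReal.mul_ne_top (hffin s) (by simp [hKpos s])
  -- the inner "universal" integral
  set J : S → ℝ≥0∞ := fun t => ∫⁻ g, f (g⁻¹ • t) * (K (g⁻¹ • t))⁻¹ ∂lam with hJdef
  -- J is constant, by left invariance of Haar measure
  have hJconst : ∀ t, J t = J c := by
    intro t
    obtain ⟨g₀, hg₀⟩ := htrans c t
    have h2 : ∀ g : G, (g₀ * g)⁻¹ • t = g⁻¹ • c := fun g => by
      rw [← hg₀, mul_inv_rev, mul_smul, inv_smul_smul]
    have h3 := lintegral_mul_left_eq_self (μ := lam)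
      (fun u => f (u⁻¹ • t) * (K (u⁻¹ • t))⁻¹) g₀
    simp only [h2] at h3
    exact h3.symm
  -- main computation
  calc ∫⁻ s, f s ∂ρ
      = ∫⁻ s, (f s * (K s)⁻¹) * K s ∂ρ := by
        congr 1; ext s
        rw [mul_assoc, ENNReal.inv_mul_cancel (hKpos s) (hKfin s), mul_one]
    _ = ∫⁻ s, ∫⁻ g, (f s * (K s)⁻¹) * k (g • s) ∂lam ∂ρ := by
        congr 1; ext s
        rw [lintegral_const_mul' _ _ (hFfin s)]
    _ = ∫⁻ g, ∫⁻ s, (f s * (K s)⁻¹) * k (g • s) ∂ρ ∂lam := by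
        refine (lintegral_lintegral_swap ?_).symm
        have hm : Measurable fun p : G × S => (f p.2 * (K p.2)⁻¹) * k (p.1 • p.2) :=
          (hF.comp measurable_snd).mul (hk.comp hact)
        exact hm.aemeasurable
    _ = ∫⁻ g, ∫⁻ t, (f (g⁻¹ • t) * (K (g⁻¹ • t))⁻¹) * k t ∂ρ ∂lam := by
        congr 1; ext g
        have hφ : Measurable fun t : S => (f (g⁻¹ • t) * (K (g⁻¹ • t))⁻¹) * k t :=
          (hF.comp (hsmul g⁻¹)).mul hk
        conv_rhs => rw [← hρ g, lintegral_map hφ (hsmul g)]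
        simp [inv_smul_smul]
    _ = ∫⁻ t, ∫⁻ g, (f (g⁻¹ • t) * (K (g⁻¹ • t))⁻¹) * k t ∂lam ∂ρ := by
        refine lintegral_lintegral_swap ?_
        exact ((hF.comp hinvsmul).mul (hk.comp measurable_snd)).aemeasurable
    _ = ∫⁻ t, J t * k t ∂ρ := by
        congr 1; ext t
        rw [hJdef, lintegral_mul_const' _ _ (hkpos t).2.ne]
    _ = ∫⁻ t, J c * k t ∂ρ := by simp_rw [hJconst]
    _ = J c * ∫⁻ t, k t ∂ρ := lintegral_const_mul _ hk

/-- If a lcsc group `G` acts transitively and properly on a Borel space `S` with a point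
`c` whose stabilizer is compact, then every σ-finite `G`-invariant measure `ν` on `S` is a
constant multiple of `μ_c = λ ∘ π_c⁻¹`. -/
theorem stmt_10 {G S : Type*} [Group G] [TopologicalSpace G] [IsTopologicalGroup G]
    [LocallyCompactSpace G] [SecondCountableTopology G] [T2Space G]
    [MeasurableSpace G] [BorelSpace G]
    [MeasurableSpace S] [StandardBorelSpace S] [MulAction G S]
    (hact : Measurable fun p : G × S => p.1 • p.2)
    (lam : Measure G) [lam.IsHaarMeasure]
    (htrans : ∀ s t : S, ∃ g : G, g • s = t)
    -- properness
    (k : S → ℝ≥0∞) (hk : Measurable k) (hkpos : ∀ t, 0 < k t ∧ k t < ⊤)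
    (hkfin : ∀ s : S, ∫⁻ g, k (g • s) ∂lam < ⊤)
    (c : S) (hc : IsCompact {g : G | g • c = c})
    (ν : Measure S) [SigmaFinite ν]
    (hν : ∀ g : G, Measure.map (fun t : S => g • t) ν = ν) :
    ∃ C : ℝ≥0∞, ν = C • Measure.map (fun g : G => g • c) lam := by
  have hπ : Measurable fun g : G => g • c :=
    hact.comp (measurable_id.prodMk measurable_const)
  have hsmulG : ∀ g : G, Measurable fun t : S => g • t := fun g =>
    hact.comp (measurable_const.prodMk measurable_id)
  set μ : Measure S := Measure.map (fun g : G => g • c) lam with hμdef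
  have hKc0 : (∫⁻ g, k (g • c) ∂lam) ≠ 0 := by
    have hmeas : Measurable fun g : G => k (g • c) := hk.comp hπ
    have : 0 < ∫⁻ g, k (g • c) ∂lam := by
      rw [lintegral_pos_iff_support hmeas]
      have : Function.support (fun g : G => k (g • c)) = Set.univ := by
        ext g; simp [Function.mem_support, (hkpos (g • c)).1.ne']
      rw [this]
      exact IsOpen.measure_pos lam isOpen_univ Set.univ_nonempty
    exact this.ne'
  have hKctop : (∫⁻ g, k (g • c) ∂lam) ≠ ⊤ := (hkfin c).ne
  -- μ is invariant
  have hμinv : ∀ g : G, Measure.map (fun t : S => g • t) μ = μ := by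
    intro g
    rw [hμdef, Measure.map_map (hsmulG g) hπ]
    have h1 : ((fun t : S => g • t) ∘ fun u : G => u • c)
        = (fun u : G => u • c) ∘ (fun u : G => g * u) := by
      ext u; simp [Function.comp, mul_smul]
    rw [h1, ← Measure.map_map hπ (measurable_const_mul g),
      MeasureTheory.map_mul_left_eq_self lam g]
  -- ∫ k dμ = K c
  have hkμ : ∫⁻ s, k s ∂μ = ∫⁻ g, k (g • c) ∂lam := lintegral_map hk hπ
  refine ⟨(∫⁻ s, k s ∂ν) * (∫⁻ g, k (g • c) ∂lam)⁻¹, ?_⟩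
  ext A hA
  have hfA : Measurable (A.indicator (1 : S → ℝ≥0∞)) :=
    measurable_one.indicator hA
  have hfAfin : ∀ s, A.indicator (1 : S → ℝ≥0∞) s ≠ ⊤ := by
    intro s
    by_cases h : s ∈ A <;> simp [Set.indicator, h]
  have hν' : ν A = (∫⁻ g, A.indicator (1 : S → ℝ≥0∞) (g⁻¹ • c) *
      (∫⁻ g', k (g' • g⁻¹ • c) ∂lam)⁻¹ ∂lam) * ∫⁻ s, k s ∂ν := by
    rw [← lintegral_indicator_one hA]
    exact stmt_10_aux hact lam htrans k hk hkpos hkfin c ν hν _ hfA hfAfin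
  have hμ' : μ A = (∫⁻ g, A.indicator (1 : S → ℝ≥0∞) (g⁻¹ • c) *
      (∫⁻ g', k (g' • g⁻¹ • c) ∂lam)⁻¹ ∂lam) * ∫⁻ s, k s ∂μ := by
    rw [← lintegral_indicator_one hA]
    exact stmt_10_aux hact lam htrans k hk hkpos hkfin c μ hμinv _ hfA hfAfin
  rw [Measure.smul_apply, smul_eq_mul, hν', hμ', hkμ]
  set J := ∫⁻ g, A.indicator (1 : S → ℝ≥0∞) (g⁻¹ • c) *
      (∫⁻ g', k (g' • g⁻¹ • c) ∂lam)⁻¹ ∂lam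
  set Kc := ∫⁻ g, k (g • c) ∂lam
  calc J * ∫⁻ s, k s ∂ν
      = ((∫⁻ s, k s ∂ν) * J) * (Kc⁻¹ * Kc) := by
        rw [ENNReal.inv_mul_cancel hKc0 hKctop, mul_one, mul_comm]
    _ = (∫⁻ s, k s ∂ν) * Kc⁻¹ * (J * Kc) := by ring
end

section
/- Let G be a lcsc group, λ a left Haar measure, Δ the modular function, and suppose G acts on a Borel space S with fixed points b, b' ∈ S. Let Δ*(s) := Δ(g⁻¹) for any g with g·b' = s (well-defined on the orbit of b'). Then for any measurable invariant function m : S × S → [0,∞] (m(g·s, g·t) = m(s,t)), ∫ m(b, s) Δ*(s) dμ_{b'}(s) = ∫ m(s, b') dμ_b(s), where μ_x = λ ∘ π_x⁻¹. -/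
open MeasureTheory ENNReal Pointwise

section Aux
variable {G : Type*} [Group G] [TopologicalSpace G] [IsTopologicalGroup G]
    [LocallyCompactSpace G] [SecondCountableTopology G] [T2Space G]
    [MeasurableSpace G] [BorelSpace G]
    (lam : Measure G) [lam.IsHaarMeasure]
    (Δ : G → ℝ≥0∞) (hΔpos : ∀ g, Δ g ≠ 0 ∧ Δ g ≠ ⊤)
    (hD : Measurable fun g : G => Δ g⁻¹)
    (hΔ : ∀ (h : G) (f : G → ℝ≥0∞), Measurable f →
      ∫⁻ g, f (g * h) ∂lam = Δ h⁻¹ * ∫⁻ g, f g ∂lam)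

include hΔ in
lemma Δ_key : ∀ h : G, Δ h⁻¹ * lam (Classical.arbitrary (TopologicalSpace.PositiveCompacts G) : Set G)
    = lam ((fun g : G => g * h) ⁻¹' (Classical.arbitrary (TopologicalSpace.PositiveCompacts G) : Set G)) := by
  intro h
  set K := Classical.arbitrary (TopologicalSpace.PositiveCompacts G)
  have hKm : MeasurableSet (K : Set G) := K.isCompact.measurableSet
  have hf : Measurable ((K : Set G).indicator (1 : G → ℝ≥0∞)) :=
    measurable_one.indicator hKm
  have := hΔ h _ hf
  rw [lintegral_indicator hKm _] at this
  simp only [Pi.one_apply, setLIntegral_one] at this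
  rw [← this]
  have : (fun g : G => (K : Set G).indicator (1 : G → ℝ≥0∞) (g * h))
      = ((fun g : G => g * h) ⁻¹' (K : Set G)).indicator 1 := by
    funext g
    by_cases hg : g * h ∈ (K : Set G) <;> simp [Set.indicator_apply, Set.mem_preimage, hg]
  rw [this, lintegral_indicator (measurable_mul_const h hKm) _]; simp

include hΔ hΔpos in
lemma Δ_mul : ∀ h₁ h₂ : G, Δ (h₁ * h₂)⁻¹ = Δ h₁⁻¹ * Δ h₂⁻¹ := by
  intro h₁ h₂
  set K := Classical.arbitrary (TopologicalSpace.PositiveCompacts G)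
  have hKm : MeasurableSet (K : Set G) := K.isCompact.measurableSet
  have hI0 : lam (K : Set G) ≠ 0 :=
    (Measure.measure_pos_of_nonempty_interior lam K.interior_nonempty).ne'
  have hItop : lam (K : Set G) ≠ ⊤ := K.isCompact.measure_lt_top.ne
  have hf : Measurable ((K : Set G).indicator (1 : G → ℝ≥0∞)) :=
    measurable_one.indicator hKm
  have hIK : ∫⁻ g, (K : Set G).indicator (1 : G → ℝ≥0∞) g ∂lam = lam (K : Set G) := by
    rw [lintegral_indicator hKm _]; simp
  have hf2 : Measurable (fun g : G => (K : Set G).indicator (1 : G → ℝ≥0∞) (g * h₂)) :=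
    hf.comp (measurable_mul_const h₂)
  have e1 : ∫⁻ g, (K : Set G).indicator (1 : G → ℝ≥0∞) (g * (h₁ * h₂)) ∂lam
      = Δ (h₁ * h₂)⁻¹ * lam (K : Set G) := by
    rw [hΔ (h₁ * h₂) _ hf, hIK]
  have e2 : ∫⁻ g, (K : Set G).indicator (1 : G → ℝ≥0∞) (g * (h₁ * h₂)) ∂lam
      = Δ h₁⁻¹ * (Δ h₂⁻¹ * lam (K : Set G)) := by
    have : (fun g : G => (K : Set G).indicator (1 : G → ℝ≥0∞) (g * (h₁ * h₂)))
        = fun g : G => (fun x : G => (K : Set G).indicator (1 : G → ℝ≥0∞) (x * h₂)) (g * h₁) := by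
      funext g; simp only []; rw [mul_assoc]
    rw [this, hΔ h₁ _ hf2, hΔ h₂ _ hf, hIK]
  have := e1.symm.trans e2
  rw [← mul_assoc] at this
  exact ((ENNReal.mul_left_inj hI0 hItop).mp this)

include hΔ hΔpos in
lemma Δ_one : Δ (1 : G) = 1 := by
  set K := Classical.arbitrary (TopologicalSpace.PositiveCompacts G)
  have hI0 : lam (K : Set G) ≠ 0 :=
    (Measure.measure_pos_of_nonempty_interior lam K.interior_nonempty).ne'
  have hItop : lam (K : Set G) ≠ ⊤ := K.isCompact.measure_lt_top.ne
  have h := Δ_key lam Δ hΔ 1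
  simp only [mul_one, inv_one, Set.preimage_id'] at h
  have : Δ (1:G) * lam (K : Set G) = 1 * lam (K : Set G) := by
    rw [one_mul]; simpa using h
  exact (ENNReal.mul_left_inj hI0 hItop).mp this

include hΔ hΔpos in
lemma Δ_inv_mul_self : ∀ h : G, Δ h⁻¹ * Δ h = 1 := by
  intro h
  have := Δ_mul lam Δ hΔpos hΔ h h⁻¹
  rw [mul_inv_cancel, inv_one, Δ_one lam Δ hΔpos hΔ, inv_inv] at this
  exact this.symm

include hΔpos hΔ hD in
lemma haar_inversion :
    ∀ f : G → ℝ≥0∞, Measurable f → ∫⁻ g, f g⁻¹ * Δ g⁻¹ ∂lam = ∫⁻ g, f g ∂lam := by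
  classical
  set D : G → ℝ≥0∞ := fun g => Δ g⁻¹ with hDdef
  set ν : Measure G := Measure.map Inv.inv (lam.withDensity D) with hνdef
  -- lintegral formula for ν
  have hν : ∀ f : G → ℝ≥0∞, Measurable f →
      ∫⁻ x, f x ∂ν = ∫⁻ g, f g⁻¹ * D g ∂lam := by
    intro f hf
    rw [hνdef, lintegral_map hf measurable_inv,
      lintegral_withDensity_eq_lintegral_mul lam hD
        (show Measurable fun a : G => f a⁻¹ from hf.comp measurable_inv)]
    exact lintegral_congr fun g => mul_comm _ _
  have nuapp : ∀ B : Set G, MeasurableSet B →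
      ν B = ∫⁻ g, B.indicator (fun _ => (1 : ℝ≥0∞)) g⁻¹ * D g ∂lam := by
    intro B hB
    have h1 := hν _ (measurable_one.indicator hB)
    rw [lintegral_indicator hB] at h1
    simpa [Pi.one_def] using h1
  -- left invariance
  have hlinv : ν.IsMulLeftInvariant := by
    constructor
    intro h
    ext A hA
    rw [Measure.map_apply (measurable_const_mul h) hA,
      nuapp _ (measurable_const_mul h hA), nuapp _ hA]
    set F : G → ℝ≥0∞ := fun g => A.indicator (fun _ => (1 : ℝ≥0∞)) g⁻¹ * D g with hFdef
    have hFm : Measurable F :=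
      ((measurable_one.indicator hA).comp measurable_inv).mul hD
    have key := hΔ h⁻¹ F hFm
    rw [inv_inv] at key
    have hpt : ∀ g : G, F (g * h⁻¹)
        = (((h * ·) ⁻¹' A).indicator (fun _ => (1 : ℝ≥0∞)) g⁻¹ * D g) * Δ h := by
      intro g
      have e1 : (g * h⁻¹)⁻¹ = h * g⁻¹ := by group
      have e2 : D (g * h⁻¹) = D g * Δ h := by
        simp only [hDdef]
        rw [Δ_mul lam Δ hΔpos hΔ g h⁻¹, inv_inv]
      have e3 : A.indicator (fun _ => (1 : ℝ≥0∞)) (h * g⁻¹)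
          = ((h * ·) ⁻¹' A).indicator (fun _ => (1 : ℝ≥0∞)) g⁻¹ := by
        by_cases hg : h * g⁻¹ ∈ A <;>
          simp [Set.indicator_apply, Set.mem_preimage, hg]
      simp only [hFdef, e1, e2, e3]
      ring
    have hmeas' : Measurable fun g : G =>
        ((h * ·) ⁻¹' A).indicator (fun _ => (1 : ℝ≥0∞)) g⁻¹ * D g :=
      ((measurable_one.indicator (measurable_const_mul h hA)).comp measurable_inv).mul hD
    have key2 : (∫⁻ g, ((h * ·) ⁻¹' A).indicator (fun _ => (1 : ℝ≥0∞)) g⁻¹ * D g ∂lam) * Δ h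
        = Δ h * ∫⁻ g, F g ∂lam := by
      rw [← key, lintegral_congr hpt]
      exact (lintegral_mul_const _ hmeas').symm
    rw [mul_comm] at key2
    exact (ENNReal.mul_right_inj (hΔpos h).1 (hΔpos h).2).mp key2
  -- finite on compacts
  set K := Classical.arbitrary (TopologicalSpace.PositiveCompacts G)
  have hI0 : lam (K : Set G) ≠ 0 :=
    (Measure.measure_pos_of_nonempty_interior lam K.interior_nonempty).ne'
  have hItop : lam (K : Set G) ≠ ⊤ := K.isCompact.measure_lt_top.ne
  have hfc : IsFiniteMeasureOnCompacts ν := by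
    constructor
    intro C hC
    have hCm : MeasurableSet C := hC.measurableSet
    rw [hνdef, Measure.map_apply measurable_inv hCm,
      withDensity_apply _ (measurable_inv hCm)]
    set B := lam ((K : Set G) * C) with hBdef
    have hBtop : B ≠ ⊤ := (K.isCompact.mul hC).measure_lt_top.ne
    have hbound : ∀ g ∈ Inv.inv ⁻¹' C, D g ≤ B / lam (K : Set G) := by
      intro g hg
      have hkey := Δ_key lam Δ hΔ g
      have hsub : (fun x : G => x * g) ⁻¹' (K : Set G) ⊆ (K : Set G) * C := by
        intro x hx
        exact ⟨x * g, hx, g⁻¹, hg, by group⟩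
      have hle : Δ g⁻¹ * lam (K : Set G) ≤ B :=
        hkey.le.trans (measure_mono hsub)
      exact (ENNReal.le_div_iff_mul_le (Or.inl hI0) (Or.inl hItop)).mpr hle
    calc ∫⁻ g in Inv.inv ⁻¹' C, D g ∂lam
        ≤ ∫⁻ _ in Inv.inv ⁻¹' C, B / lam (K : Set G) ∂lam :=
          setLIntegral_mono measurable_const hbound
      _ = B / lam (K : Set G) * lam (Inv.inv ⁻¹' C) := setLIntegral_const _ _
      _ < ⊤ := by
          apply ENNReal.mul_lt_top (ENNReal.div_lt_top hBtop hI0)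
          rw [Set.inv_preimage]
          exact hC.inv.measure_lt_top
  -- uniqueness
  have hc : ν = Measure.haarScalarFactor ν lam • lam :=
    Measure.isMulLeftInvariant_eq_smul ν lam
  set c : ℝ≥0∞ := (Measure.haarScalarFactor ν lam : ℝ≥0∞) with hcdef
  have hc' : ν = c • lam := by rw [hc, ENNReal.smul_def]
  -- involution
  have hDD : (D * fun g : G => D g⁻¹) = (1 : G → ℝ≥0∞) := by
    funext g
    simp only [Pi.mul_apply, Pi.one_apply, hDdef, inv_inv]
    exact Δ_inv_mul_self lam Δ hΔpos hΔ g
  have step1 : ν.withDensity D = Measure.map Inv.inv lam := by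
    have e1 : ν.withDensity D
        = Measure.map Inv.inv ((lam.withDensity D).withDensity (fun g => D g⁻¹)) := by
      ext A hA
      rw [withDensity_apply _ hA, Measure.map_apply measurable_inv hA,
        withDensity_apply _ (measurable_inv hA), hνdef,
        setLIntegral_map hA hD measurable_inv]
    rw [e1, ← withDensity_mul lam hD
      (show Measurable fun g : G => D g⁻¹ from hD.comp measurable_inv), hDD, withDensity_one]
  have hinvol : Measure.map Inv.inv (ν.withDensity D) = lam := by
    rw [step1, Measure.map_map measurable_inv measurable_inv]
    simp [Function.comp_def]
  have hother : Measure.map Inv.inv (ν.withDensity D) = c • ν := by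
    rw [hc', withDensity_smul_measure, Measure.map_smul, ← hc', ← hνdef]
  have hc2 : lam = (c * c) • lam := by
    conv_lhs => rw [← hinvol]
    rw [hother, hc', smul_smul]
  have hcc : c * c = 1 := by
    have := congrArg (fun μ : Measure G => μ (K : Set G)) hc2
    simp only [Measure.smul_apply, smul_eq_mul] at this
    have h1 : (c * c) * lam (K : Set G) = 1 * lam (K : Set G) := by
      rw [one_mul]; exact this.symm
    exact (ENNReal.mul_left_inj hI0 hItop).mp h1
  have hc1 : c = 1 := by
    have hsq : c ^ 2 = 1 ^ 2 := by rw [pow_two, one_pow, hcc]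
    exact (ENNReal.pow_right_strictMono two_ne_zero).injective hsq
  have hνlam : ν = lam := by rw [hc', hc1, one_smul]
  intro f hf
  rw [← hν f hf, hνlam]

end Aux


/-- Balance equation between two orbits: for points `b, b' ∈ S`, with
`Δ*(s) := Δ(g⁻¹)` for any `g` with `g·b' = s`, and any measurable jointly invariant
`m : S × S → [0,∞]`, one has `∫ m(b,s) Δ*(s) dμ_{b'}(s) = ∫ m(s,b') dμ_b(s)`. -/
theorem stmt_12 {G S : Type*} [Group G] [TopologicalSpace G] [IsTopologicalGroup G]
    [LocallyCompactSpace G] [SecondCountableTopology G] [T2Space G]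
    [MeasurableSpace G] [BorelSpace G]
    [MeasurableSpace S] [StandardBorelSpace S] [MulAction G S]
    (hact : Measurable fun p : G × S => p.1 • p.2)
    (lam : Measure G) [lam.IsHaarMeasure]
    (Δ : G → ℝ≥0∞) (hΔpos : ∀ g, Δ g ≠ 0 ∧ Δ g ≠ ⊤)
    (hΔ : ∀ (h : G) (f : G → ℝ≥0∞), Measurable f →
      ∫⁻ g, f (g * h) ∂lam = Δ h⁻¹ * ∫⁻ g, f g ∂lam)
    (b b' : S)
    (Δstar : S → ℝ≥0∞) (hΔstar_meas : Measurable Δstar)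
    (hΔstar : ∀ g : G, Δstar (g • b') = Δ g⁻¹)
    (m : S → S → ℝ≥0∞) (hm : Measurable fun p : S × S => m p.1 p.2)
    (hminv : ∀ (g : G) (s t : S), m (g • s) (g • t) = m s t) :
    ∫⁻ s, m b s * Δstar s ∂(Measure.map (fun g : G => g • b') lam)
      = ∫⁻ s, m s b' ∂(Measure.map (fun g : G => g • b) lam) := by
  have hφ' : Measurable fun g : G => g • b' :=
    hact.comp (measurable_id.prodMk measurable_const)
  have hφ : Measurable fun g : G => g • b :=
    hact.comp (measurable_id.prodMk measurable_const)
  have hmb : Measurable fun s : S => m b s * Δstar s :=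
    (hm.comp (measurable_const.prodMk measurable_id)).mul hΔstar_meas
  have hmb' : Measurable fun s : S => m s b' :=
    hm.comp (measurable_id.prodMk measurable_const)
  rw [lintegral_map hmb hφ', lintegral_map hmb' hφ]
  have hD : Measurable fun g : G => Δ g⁻¹ := by
    have he : (fun g : G => Δ g⁻¹) = fun g : G => Δstar (g • b') := by
      funext g; rw [hΔstar]
    rw [he]; exact hΔstar_meas.comp hφ'
  set f : G → ℝ≥0∞ := fun g => m (g • b) b' with hfdef
  have hf : Measurable f := hm.comp (hφ.prodMk measurable_const)
  have hpt : ∀ g : G, m b (g • b') * Δstar (g • b') = f g⁻¹ * Δ g⁻¹ := by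
    intro g
    rw [hΔstar]
    congr 1
    have h1 := hminv g⁻¹ b (g • b')
    rw [inv_smul_smul] at h1
    exact h1.symm
  rw [lintegral_congr hpt]
  exact haar_inversion lam Δ hΔpos hD hΔ f hf
end

section
/- Let G be a unimodular lcsc group acting transitively on itself (S = G) and let M be a σ-finite measure on G × G invariant under the diagonal action (s,t) ↦ (gs, gt). Then for every measurable B ⊆ G, M(B × G) = M(G × B). -/
open MeasureTheory ENNReal

/-- Key identity: for a diagonally invariant σ-finite `M` and a weight `w` with all
left-translated integrals equal to 1, the `M`-integral of `u ∘ fst` factors. -/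
lemma mtp_key {G : Type*} [Group G] [MeasurableSpace G] [MeasurableMul₂ G] [MeasurableInv G]
    (lam : Measure G) [SigmaFinite lam] [lam.IsMulLeftInvariant] [lam.IsMulRightInvariant]
    (M : Measure (G × G)) [SigmaFinite M]
    (hM : ∀ g : G, Measure.map (fun p : G × G => (g * p.1, g * p.2)) M = M)
    (w : G → ℝ≥0∞) (hw : Measurable w) (hw1 : ∀ a : G, ∫⁻ h, w (a * h) ∂lam = 1)
    (u : G → ℝ≥0∞) (hu : Measurable u) :
    ∫⁻ p, u p.1 ∂M = (∫⁻ x, u x ∂lam) * ∫⁻ p, w p.2⁻¹ ∂M := by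
  have hact : ∀ g : G, Measurable (fun p : G × G => (g * p.1, g * p.2)) :=
    fun g => (measurable_fst.const_mul g).prodMk (measurable_snd.const_mul g)
  have hf1 : Measurable (Function.uncurry fun (p : G × G) (h : G) => u p.1 * w (p.2⁻¹ * h)) := by
    apply Measurable.mul
    · exact hu.comp (measurable_fst.comp measurable_fst)
    · exact hw.comp (((measurable_snd.comp measurable_fst).inv).mul measurable_snd)
  have hf2 : Measurable (Function.uncurry fun (h : G) (p : G × G) => u (h * p.1) * w p.2⁻¹) := by
    apply Measurable.mul
    · exact hu.comp (measurable_fst.mul (measurable_fst.comp measurable_snd))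
    · exact hw.comp ((measurable_snd.comp measurable_snd).inv)
  calc ∫⁻ p, u p.1 ∂M
      = ∫⁻ p : G × G, ∫⁻ h, u p.1 * w (p.2⁻¹ * h) ∂lam ∂M := by
        refine lintegral_congr fun p => ?_
        rw [lintegral_const_mul (u p.1) (show Measurable fun h => w (p.2⁻¹ * h) by fun_prop),
          hw1, mul_one]
    _ = ∫⁻ h, ∫⁻ p : G × G, u p.1 * w (p.2⁻¹ * h) ∂M ∂lam :=
        lintegral_lintegral_swap hf1.aemeasurable
    _ = ∫⁻ h, ∫⁻ p : G × G, u (h * p.1) * w p.2⁻¹ ∂M ∂lam := by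
        refine lintegral_congr fun h => ?_
        conv_lhs => rw [← hM h]
        rw [lintegral_map (by fun_prop) (hact h)]
        refine lintegral_congr fun p => ?_
        simp [mul_inv_rev, mul_assoc]
    _ = ∫⁻ p : G × G, ∫⁻ h, u (h * p.1) * w p.2⁻¹ ∂lam ∂M :=
        lintegral_lintegral_swap hf2.aemeasurable
    _ = ∫⁻ p : G × G, (∫⁻ x, u x ∂lam) * w p.2⁻¹ ∂M := by
        refine lintegral_congr fun p => ?_
        rw [lintegral_mul_const _ (show Measurable fun h => u (h * p.1) by fun_prop),
          lintegral_mul_right_eq_self u p.1]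
    _ = (∫⁻ x, u x ∂lam) * ∫⁻ p, w p.2⁻¹ ∂M :=
        lintegral_const_mul _ (hw.comp measurable_snd.inv)

/-- Mass-transport principle, transitive unimodular case: for a unimodular lcsc group `G`
acting on itself and a σ-finite measure `M` on `G × G` invariant under the diagonal action
`(s,t) ↦ (gs,gt)`, one has `M(B × G) = M(G × B)` for every measurable `B ⊆ G`. -/
theorem stmt_13 {G : Type*} [Group G] [TopologicalSpace G] [IsTopologicalGroup G]
    [LocallyCompactSpace G] [SecondCountableTopology G] [T2Space G]
    [MeasurableSpace G] [BorelSpace G]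
    (lam : Measure G) [lam.IsHaarMeasure] [lam.IsMulRightInvariant]
    (M : Measure (G × G)) [SigmaFinite M]
    (hM : ∀ g : G, Measure.map (fun p : G × G => (g * p.1, g * p.2)) M = M)
    (B : Set G) (hB : MeasurableSet B) :
    M (B ×ˢ Set.univ) = M (Set.univ ×ˢ B) := by
  -- a symmetric compact set of positive finite measure
  obtain ⟨K₀, hK₀c, hK₀n⟩ := exists_compact_mem_nhds (1 : G)
  set K : Set G := K₀ ∪ K₀⁻¹ with hK
  have hKc : IsCompact K := hK₀c.union hK₀c.inv
  have hKm : MeasurableSet K := hKc.isClosed.measurableSet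
  have hKpos : 0 < lam K := by
    refine lt_of_lt_of_le ?_ (measure_mono Set.subset_union_left)
    exact Measure.measure_pos_of_mem_nhds lam hK₀n
  have hKfin : lam K ≠ ⊤ := hKc.measure_lt_top.ne
  set w : G → ℝ≥0∞ := fun x => (lam K)⁻¹ * K.indicator 1 x with hwdef
  have hw : Measurable w := (measurable_const.mul (measurable_one.indicator hKm))
  have hwsymm : ∀ x, w x⁻¹ = w x := by
    intro x
    have : x⁻¹ ∈ K ↔ x ∈ K := by
      constructor <;> intro hx
      · rcases hx with hx | hx
        · exact Or.inr (by simpa using hx)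
        · exact Or.inl (by simpa using hx)
      · rcases hx with hx | hx
        · exact Or.inr (by simpa using hx)
        · exact Or.inl (by simpa using hx)
    simp only [hwdef, Set.indicator]
    by_cases hx : x ∈ K <;> simp [hx, this]
  have hw1 : ∀ a : G, ∫⁻ h, w (a * h) ∂lam = 1 := by
    intro a
    simp only [hwdef]
    rw [lintegral_const_mul _ (show Measurable fun h => K.indicator 1 (a * h) by
      exact (measurable_one.indicator hKm).comp (measurable_const_mul a))]
    have : ∫⁻ h, K.indicator 1 (a * h) ∂lam = lam K := by
      rw [lintegral_mul_left_eq_self (fun x => K.indicator 1 x) a, lintegral_indicator_one hKm]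
    rw [this, ENNReal.inv_mul_cancel hKpos.ne' hKfin]
  -- swapped measure
  set M' : Measure (G × G) := M.map Prod.swap with hM'def
  have hswapm : Measurable (Prod.swap : G × G → G × G) := measurable_swap
  have : SigmaFinite M' :=
    MeasurableEquiv.sigmaFinite_map (MeasurableEquiv.prodComm (α := G) (β := G))
  have hM' : ∀ g : G, Measure.map (fun p : G × G => (g * p.1, g * p.2)) M' = M' := by
    intro g
    rw [hM'def, Measure.map_map ((measurable_fst.const_mul g).prodMk
      (measurable_snd.const_mul g)) hswapm]
    have : ((fun p : G × G => (g * p.1, g * p.2)) ∘ Prod.swap)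
        = Prod.swap ∘ (fun p : G × G => (g * p.1, g * p.2)) := rfl
    rw [this, ← Measure.map_map hswapm ((measurable_fst.const_mul g).prodMk
      (measurable_snd.const_mul g)), hM g]
  have key := mtp_key lam M hM w hw hw1
  have key' := mtp_key lam M' hM' w hw hw1
  -- c₁ = c₂
  have hc : ∫⁻ p, w p.1⁻¹ ∂M = ∫⁻ p, w p.2⁻¹ ∂M := by
    have := key (fun x => w x⁻¹) (hw.comp measurable_inv)
    have hint : ∫⁻ x, w x⁻¹ ∂lam = 1 := by
      simp only [hwsymm]
      simpa using hw1 1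
    rw [hint, one_mul] at this
    exact this
  -- compute both sides
  have hind : Measurable (B.indicator (1 : G → ℝ≥0∞)) := measurable_one.indicator hB
  have h1 : M (B ×ˢ Set.univ) = lam B * ∫⁻ p, w p.2⁻¹ ∂M := by
    have := key (B.indicator 1) hind
    rw [lintegral_indicator_one hB] at this
    rw [← this, ← lintegral_indicator_one (hB.prod MeasurableSet.univ)]
    refine lintegral_congr fun p => ?_
    by_cases hp : p.1 ∈ B <;>
      simp [Set.indicator, Set.mem_prod, hp]
  have h2 : M (Set.univ ×ˢ B) = lam B * ∫⁻ p, w p.1⁻¹ ∂M := by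
    have := key' (B.indicator 1) hind
    rw [lintegral_indicator_one hB] at this
    have e1 : ∫⁻ p, B.indicator 1 p.1 ∂M' = M (Set.univ ×ˢ B) := by
      rw [hM'def, lintegral_map (show Measurable fun p : G × G => B.indicator 1 p.1 by fun_prop) hswapm]
      rw [← lintegral_indicator_one (MeasurableSet.univ.prod hB)]
      refine lintegral_congr fun p => ?_
      by_cases hp : p.2 ∈ B <;> simp [Set.indicator, Set.mem_prod, hp]
    have e2 : ∫⁻ p, w p.2⁻¹ ∂M' = ∫⁻ p, w p.1⁻¹ ∂M := by
      rw [hM'def, lintegral_map (show Measurable fun p : G × G => w p.2⁻¹ by fun_prop) hswapm]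
      rfl
    rw [e1, e2] at this
    exact this
  rw [h1, h2, hc]
end

section
/- Let (Ω, 𝒜, P) be a σ-finite measure space, ξ a uniformly σ-finite kernel from Ω to a Borel space S, ν a σ-finite measure on S, and Q a σ-finite kernel from S to Ω. Suppose ν ⊗ Q is σ-finite, Q_s(ξ = 0) = 0 for ν-a.e. s, and the symmetry condition ∫∫∫ f(ω,s,t) ξ(ω,dt) Q_s(dω) ν(ds) = ∫∫∫ f(ω,t,s) ξ(ω,dt) Q_s(dω) ν(ds) holds for all measurable f ≥ 0. Then there exists a σ-finite measure P on Ω such that ν ⊗ Q equals the Campbell measure C_ξ of ξ with respect to P, i.e., ∫∫ f(ω,s) Q_s(dω) ν(ds) = ∫∫ f(ω,s) ξ(ω,ds) P(dω) for all measurable f ≥ 0. -/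
open MeasureTheory ENNReal

/-- Characterization of Palm pairs (sufficiency, no invariance): if `ν ⊗ Q` is σ-finite,
`Q_s(ξ = 0) = 0` for `ν`-a.e. `s`, and the symmetry condition holds, then `(ν, Q)` is a
Palm pair of `ξ` with respect to some σ-finite measure `P` on `Ω`, i.e., `ν ⊗ Q` is the
Campbell measure of `ξ` with respect to `P`. -/
theorem stmt_19 {Ω S : Type*} [MeasurableSpace Ω]
    [MeasurableSpace S] [StandardBorelSpace S]
    (ξ : Ω → Measure S)
    (hξmeas : ∀ B : Set S, MeasurableSet B → Measurable fun ω => ξ ω B)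
    -- uniform σ-finiteness of ξ
    (hξσ : ∃ B : ℕ → Set S, (∀ i, MeasurableSet (B i)) ∧
      Pairwise (Function.onFun Disjoint B) ∧ (⋃ i, B i) = Set.univ ∧
      ∀ (ω : Ω) (i : ℕ), ξ ω (B i) < ⊤)
    (ν : Measure S) [SigmaFinite ν]
    (Q : S → Measure Ω)
    (hQmeas : ∀ A : Set Ω, MeasurableSet A → Measurable fun s => Q s A)
    -- σ-finiteness of ν ⊗ Q
    (hνQσ : ∃ h : Ω × S → ℝ≥0∞, Measurable h ∧ (∀ p, 0 < h p) ∧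
      ∫⁻ s, ∫⁻ ω, h (ω, s) ∂(Q s) ∂ν < ⊤)
    (hQ0 : ∀ᵐ s ∂ν, Q s {ω | ξ ω = 0} = 0)
    -- symmetry condition
    (hsym : ∀ f : Ω → S → S → ℝ≥0∞,
      Measurable (fun p : Ω × S × S => f p.1 p.2.1 p.2.2) →
      ∫⁻ s, ∫⁻ ω, ∫⁻ t, f ω s t ∂(ξ ω) ∂(Q s) ∂ν
        = ∫⁻ s, ∫⁻ ω, ∫⁻ t, f ω t s ∂(ξ ω) ∂(Q s) ∂ν) :
    ∃ P : Measure Ω, SigmaFinite P ∧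
      ∀ f : Ω → S → ℝ≥0∞, Measurable (fun p : Ω × S => f p.1 p.2) →
        ∫⁻ s, ∫⁻ ω, f ω s ∂(Q s) ∂ν = ∫⁻ ω, ∫⁻ s, f ω s ∂(ξ ω) ∂P := by
  classical
  obtain ⟨B, hB, hBdisj, hBunion, hBfin⟩ := hξσ
  obtain ⟨h, hhm, hhpos, hhint⟩ := hνQσ
  have hξm : Measurable ξ := Measure.measurable_of_measurable_coe ξ hξmeas
  have hQm : Measurable Q := Measure.measurable_of_measurable_coe Q hQmeas
  -- ξ as an s-finite kernel
  let κ : ProbabilityTheory.Kernel Ω S := ⟨ξ, hξm⟩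
  have hκs_meas : ∀ i n : ℕ, Measurable (fun ω =>
      if (ξ ω (B i) < (n : ℝ≥0∞) + 1 ∧ (n : ℝ≥0∞) ≤ ξ ω (B i))
      then (ξ ω).restrict (B i) else (0 : Measure S)) := by
    intro i n
    refine Measure.measurable_of_measurable_coe _ fun A hA => ?_
    simp_rw [apply_ite (fun μ : Measure S => μ A), Measure.restrict_apply hA,
      Measure.coe_zero, Pi.zero_apply]
    refine Measurable.ite ?_ (hξmeas _ (hA.inter (hB _))) measurable_const
    exact ((hξmeas _ (hB _)) measurableSet_Iio).inter ((hξmeas _ (hB _)) measurableSet_Ici)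
  let κs : ℕ → ProbabilityTheory.Kernel Ω S := fun m =>
    ⟨fun ω => if (ξ ω (B m.unpair.1) < (m.unpair.2 : ℝ≥0∞) + 1
        ∧ (m.unpair.2 : ℝ≥0∞) ≤ ξ ω (B m.unpair.1)) then (ξ ω).restrict (B m.unpair.1)
        else 0, hκs_meas m.unpair.1 m.unpair.2⟩
  have hκs_apply : ∀ (m : ℕ) (ω : Ω) (A : Set S), MeasurableSet A → κs m ω A =
      (fun p : ℕ × ℕ => if (ξ ω (B p.1) < (p.2 : ℝ≥0∞) + 1
        ∧ (p.2 : ℝ≥0∞) ≤ ξ ω (B p.1)) then ξ ω (A ∩ B p.1) else 0) m.unpair := by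
    intro m ω A hA
    show (if _ then (ξ ω).restrict (B m.unpair.1) else (0 : Measure S)) A = _
    simp only
    split_ifs with hc
    · exact Measure.restrict_apply hA
    · rfl
  haveI hκsfin : ProbabilityTheory.IsSFiniteKernel κ := by
    refine ⟨⟨κs, fun m => ?_, ?_⟩⟩
    · -- finiteness
      refine ⟨(m.unpair.2 : ℝ≥0∞) + 1, by simp [lt_top_iff_ne_top], fun ω => ?_⟩
      rw [hκs_apply m ω _ MeasurableSet.univ]
      simp only
      split_ifs with hc
      · rw [Set.univ_inter]; exact hc.1.le
      · exact zero_le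
    · -- sum equals κ
      ext ω A hA
      rw [ProbabilityTheory.Kernel.sum_apply, Measure.sum_apply _ hA]
      have hsplit : ∀ i : ℕ,
          (∑' n : ℕ, if (ξ ω (B i) < (n : ℝ≥0∞) + 1 ∧ (n : ℝ≥0∞) ≤ ξ ω (B i))
            then ξ ω (A ∩ B i) else 0) = ξ ω (A ∩ B i) := by
        intro i
        have hex : ∃ n : ℕ, ξ ω (B i) < (n : ℝ≥0∞) + 1 := by
          obtain ⟨n, hn⟩ := ENNReal.exists_nat_gt (hBfin ω i).ne
          exact ⟨n, hn.trans_le le_self_add⟩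
        set n₀ := Nat.find hex with hn₀
        have hmin : ξ ω (B i) < (n₀ : ℝ≥0∞) + 1 := Nat.find_spec hex
        have hsingle : ∀ n, n ≠ n₀ →
            (if (ξ ω (B i) < (n : ℝ≥0∞) + 1 ∧ (n : ℝ≥0∞) ≤ ξ ω (B i))
              then ξ ω (A ∩ B i) else 0) = 0 := by
          intro n hn
          rcases lt_or_gt_of_ne hn with hlt | hgt
          · rw [if_neg]
            rintro ⟨h1, -⟩
            exact Nat.find_min hex hlt h1
          · rw [if_neg]
            rintro ⟨-, h2⟩
            have hle : ((n₀ + 1 : ℕ) : ℝ≥0∞) ≤ (n : ℝ≥0∞) := Nat.cast_le.mpr hgt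
            rw [Nat.cast_succ] at hle
            exact absurd (hmin.trans_le hle) (not_lt.mpr h2)
        have hcond : (n₀ : ℝ≥0∞) ≤ ξ ω (B i) := by
          rcases Nat.eq_zero_or_pos n₀ with h0 | hpos
          · rw [h0]; simp
          · by_contra hlt
            push_neg at hlt
            refine Nat.find_min hex (m := n₀ - 1) (by omega) ?_
            have he : ((n₀ - 1 : ℕ) : ℝ≥0∞) + 1 = (n₀ : ℝ≥0∞) := by
              rw [← Nat.cast_succ]; congr 1; omega
            rw [he]; exact hlt
        rw [tsum_eq_single n₀ hsingle, if_pos ⟨hmin, hcond⟩]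
      calc (κ ω) A = ξ ω A := rfl
        _ = ξ ω (⋃ i, A ∩ B i) := by rw [← Set.inter_iUnion, hBunion, Set.inter_univ]
        _ = ∑' i, ξ ω (A ∩ B i) :=
            measure_iUnion (fun i j hij => ((hBdisj hij).mono inf_le_right inf_le_right))
              (fun i => hA.inter (hB i))
        _ = ∑' i : ℕ, ∑' n : ℕ, (if (ξ ω (B i) < (n : ℝ≥0∞) + 1 ∧ (n : ℝ≥0∞) ≤ ξ ω (B i))
              then ξ ω (A ∩ B i) else 0) := (tsum_congr hsplit).symm
        _ = ∑' p : ℕ × ℕ, (fun q : ℕ × ℕ => if (ξ ω (B q.1) < (q.2 : ℝ≥0∞) + 1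
              ∧ (q.2 : ℝ≥0∞) ≤ ξ ω (B q.1)) then ξ ω (A ∩ B q.1) else 0) p :=
            (ENNReal.tsum_prod' (f := fun q : ℕ × ℕ => if (ξ ω (B q.1) < (q.2 : ℝ≥0∞) + 1
              ∧ (q.2 : ℝ≥0∞) ≤ ξ ω (B q.1)) then ξ ω (A ∩ B q.1) else 0)).symm
        _ = ∑' m : ℕ, (fun q : ℕ × ℕ => if (ξ ω (B q.1) < (q.2 : ℝ≥0∞) + 1
              ∧ (q.2 : ℝ≥0∞) ≤ ξ ω (B q.1)) then ξ ω (A ∩ B q.1) else 0) m.unpair :=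
            (Equiv.tsum_eq Nat.pairEquiv.symm _).symm
        _ = ∑' m : ℕ, κs m ω A := (tsum_congr fun m => hκs_apply m ω A hA).symm
  have hlint : ∀ f : Ω → S → ℝ≥0∞, Measurable (fun p : Ω × S => f p.1 p.2) →
      Measurable (fun ω => ∫⁻ t, f ω t ∂ξ ω) := by
    intro f hf
    exact Measurable.lintegral_kernel_prod_right (κ := κ) hf

  -- normalizing functions
  set c : Ω → ℝ≥0∞ := fun ω => ∑' i, (2⁻¹ : ℝ≥0∞) ^ i * (ξ ω (B i) * (max 1 (ξ ω (B i)))⁻¹)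
    with hcdef
  set u : ℕ → Ω → ℝ≥0∞ := fun i ω =>
    (2⁻¹ : ℝ≥0∞) ^ i * (max 1 (ξ ω (B i)))⁻¹ * (if c ω = 0 then 0 else (c ω)⁻¹) with hudef
  have hmaxne : ∀ ω i, max 1 (ξ ω (B i)) ≠ ∞ :=
    fun ω i => (max_lt ENNReal.one_lt_top (hBfin ω i)).ne
  have hmaxne0 : ∀ ω i, max 1 (ξ ω (B i)) ≠ 0 := by
    intro ω i h0
    have h1 : (1 : ℝ≥0∞) ≤ max 1 (ξ ω (B i)) := le_max_left _ _
    rw [h0] at h1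
    simp at h1
  have hdle : ∀ ω i, ξ ω (B i) * (max 1 (ξ ω (B i)))⁻¹ ≤ 1 := by
    intro ω i
    rw [← div_eq_mul_inv, ENNReal.div_le_iff (hmaxne0 ω i) (hmaxne ω i)]
    simpa using le_max_right _ _
  have hcne : ∀ ω, c ω ≠ ∞ := by
    intro ω
    have hle : c ω ≤ ∑' i : ℕ, (2⁻¹ : ℝ≥0∞) ^ i := by
      rw [hcdef]
      exact Summable.tsum_le_tsum (fun i => by
        calc (2⁻¹ : ℝ≥0∞) ^ i * (ξ ω (B i) * (max 1 (ξ ω (B i)))⁻¹)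
            ≤ (2⁻¹ : ℝ≥0∞) ^ i * 1 := mul_le_mul_right (hdle ω i) _
          _ = (2⁻¹ : ℝ≥0∞) ^ i := mul_one _) ENNReal.summable ENNReal.summable
    refine (hle.trans_lt ?_).ne
    rw [ENNReal.tsum_geometric, ENNReal.one_sub_inv_two]
    simp
  have hmeasc : Measurable c := by
    refine Measurable.ennreal_tsum fun i => ?_
    exact measurable_const.mul (((hξmeas _ (hB i)).mul
      ((measurable_const.max (hξmeas _ (hB i))).inv)))
  have hmeasu : ∀ i, Measurable (u i) := by
    intro i
    refine (measurable_const.mul ((measurable_const.max (hξmeas _ (hB i))).inv)).mul ?_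
    exact Measurable.ite (hmeasc (measurableSet_singleton 0)) measurable_const hmeasc.inv
  have hufin : ∀ i ω, u i ω ≠ ∞ := by
    intro i ω
    rw [hudef]
    simp only
    split_ifs with h0
    · simp
    · exact ENNReal.mul_ne_top (ENNReal.mul_ne_top (by simp) (by simp [hmaxne0 ω i]))
        (by simp [h0])
  have hc0 : ∀ ω, c ω = 0 ↔ ξ ω = 0 := by
    intro ω
    constructor
    · intro h0
      rw [hcdef] at h0
      simp only [ENNReal.tsum_eq_zero] at h0
      have hB0 : ∀ i, ξ ω (B i) = 0 := by
        intro i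
        have := h0 i
        rcases mul_eq_zero.mp this with hp | hd
        · exact absurd hp (pow_ne_zero _ (by simp))
        · rcases mul_eq_zero.mp hd with h1 | h2
          · exact h1
          · exact absurd h2 (by simp [hmaxne ω i])
      refine Measure.measure_univ_eq_zero.mp ?_
      rw [← hBunion, measure_iUnion hBdisj hB]
      simp [hB0]
    · intro h0
      rw [hcdef]
      simp [h0]
  have hsum_u : ∀ ω, c ω ≠ 0 → ∑' i, u i ω * ξ ω (B i) = 1 := by
    intro ω hc
    have he : ∀ i, u i ω * ξ ω (B i)
        = (c ω)⁻¹ * ((2⁻¹ : ℝ≥0∞) ^ i * (ξ ω (B i) * (max 1 (ξ ω (B i)))⁻¹)) := by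
      intro i
      rw [hudef]
      simp only [if_neg hc]
      ring
    rw [tsum_congr he, ENNReal.tsum_mul_left]
    exact ENNReal.inv_mul_cancel hc (hcne ω)
  -- the measure P
  have hQu : ∀ i, Measurable (fun s => (Q s).withDensity (u i)) := by
    intro i
    refine Measure.measurable_of_measurable_coe _ fun A hA => ?_
    simp_rw [withDensity_apply _ hA, ← lintegral_indicator hA]
    exact (Measure.measurable_lintegral ((hmeasu i).indicator hA)).comp hQm
  set P : Measure Ω := Measure.sum fun i =>
    (ν.restrict (B i)).bind fun s => (Q s).withDensity (u i) with hPdef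
  have hPint : ∀ Φ : Ω → ℝ≥0∞, Measurable Φ →
      ∫⁻ ω, Φ ω ∂P = ∑' i, ∫⁻ s in B i, ∫⁻ ω, u i ω * Φ ω ∂(Q s) ∂ν := by
    intro Φ hΦ
    rw [hPdef, lintegral_sum_measure]
    refine tsum_congr fun i => ?_
    rw [Measure.lintegral_bind (hQu i).aemeasurable hΦ.aemeasurable]
    refine lintegral_congr fun s => ?_
    rw [lintegral_withDensity_eq_lintegral_mul _ (hmeasu i) hΦ]
    rfl

  -- collapse helpers
  have hmem : ∀ s : S, ∃ i, s ∈ B i := fun s =>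
    Set.mem_iUnion.mp (hBunion ▸ Set.mem_univ s)
  have hnot : ∀ {s : S} {i₀ j : ℕ}, s ∈ B i₀ → j ≠ i₀ → s ∉ B j :=
    fun hs hj hsj => (hBdisj hj).le_bot ⟨hsj, hs⟩
  -- main identity
  have key : ∀ f : Ω → S → ℝ≥0∞, Measurable (fun p : Ω × S => f p.1 p.2) →
      ∫⁻ ω, ∫⁻ t, f ω t ∂ξ ω ∂P = ∫⁻ s, ∫⁻ ω, f ω s ∂Q s ∂ν := by
    intro f hf
    have hΦ : Measurable (fun ω => ∫⁻ t, f ω t ∂ξ ω) := hlint f hf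
    set F : Ω → S → S → ℝ≥0∞ := fun ω s t =>
      ∑' i, (B i).indicator (fun _ => (1 : ℝ≥0∞)) s * (u i ω * f ω t) with hFdef
    have hFmeas : Measurable (fun p : Ω × S × S => F p.1 p.2.1 p.2.2) := by
      refine Measurable.ennreal_tsum fun i => ?_
      exact ((measurable_const.indicator (hB i)).comp
          (measurable_fst.comp measurable_snd)).mul
        (((hmeasu i).comp measurable_fst).mul
          (hf.comp (measurable_fst.prodMk (measurable_snd.comp measurable_snd))))
    have hFcollapse : ∀ (s : S) (i₀ : ℕ), s ∈ B i₀ → ∀ (ω : Ω) (t : S),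
        F ω s t = u i₀ ω * f ω t := by
      intro s i₀ hs ω t
      rw [hFdef]
      simp only
      rw [tsum_eq_single i₀ (fun j hj => by
        rw [Set.indicator_of_notMem (hnot hs hj), zero_mul])]
      rw [Set.indicator_of_mem hs, one_mul]
    set V : ℕ → S → ℝ≥0∞ := fun i s => ∫⁻ ω, u i ω * (∫⁻ t, f ω t ∂ξ ω) ∂Q s with hVdef
    have hVmeas : ∀ i, Measurable (V i) := fun i =>
      (Measure.measurable_lintegral ((hmeasu i).mul hΦ)).comp hQm
    calc ∫⁻ ω, ∫⁻ t, f ω t ∂ξ ω ∂P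
        = ∑' i, ∫⁻ s in B i, V i s ∂ν := hPint _ hΦ
      _ = ∑' i, ∫⁻ s, (B i).indicator (V i) s ∂ν :=
          tsum_congr fun i => (lintegral_indicator (hB i) _).symm
      _ = ∫⁻ s, ∑' i, (B i).indicator (V i) s ∂ν :=
          (lintegral_tsum fun i => ((hVmeas i).indicator (hB i)).aemeasurable).symm
      _ = ∫⁻ s, ∫⁻ ω, ∫⁻ t, F ω s t ∂ξ ω ∂Q s ∂ν := by
          refine lintegral_congr fun s => ?_
          obtain ⟨i₀, hs⟩ := hmem s
          have h1 : ∀ ω, ∫⁻ t, F ω s t ∂ξ ω = u i₀ ω * ∫⁻ t, f ω t ∂ξ ω := by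
            intro ω
            rw [lintegral_congr (fun t => hFcollapse s i₀ hs ω t),
              lintegral_const_mul' _ _ (hufin i₀ ω)]
          rw [lintegral_congr h1]
          rw [tsum_eq_single i₀ (fun j hj => Set.indicator_of_notMem (hnot hs hj) _),
            Set.indicator_of_mem hs]
      _ = ∫⁻ s, ∫⁻ ω, ∫⁻ t, F ω t s ∂ξ ω ∂Q s ∂ν := hsym F hFmeas
      _ = ∫⁻ s, ∫⁻ ω, f ω s * (if c ω = 0 then 0 else 1) ∂Q s ∂ν := by
          refine lintegral_congr fun s => lintegral_congr fun ω => ?_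
          have h2 : ∀ t, F ω t s = ∑' i, (B i).indicator (fun _ => u i ω * f ω s) t := by
            intro t
            refine tsum_congr fun i => ?_
            by_cases ht : t ∈ B i
            · rw [Set.indicator_of_mem ht, Set.indicator_of_mem ht, one_mul]
            · rw [Set.indicator_of_notMem ht, Set.indicator_of_notMem ht, zero_mul]
          rw [lintegral_congr h2,
            lintegral_tsum (fun i => (measurable_const.indicator (hB i)).aemeasurable)]
          have h3 : ∀ i : ℕ, ∫⁻ t, (B i).indicator (fun _ => u i ω * f ω s) t ∂ξ ω
              = u i ω * f ω s * ξ ω (B i) := fun i => lintegral_indicator_const (hB i) _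
          rw [tsum_congr h3]
          have h4 : ∀ i : ℕ, u i ω * f ω s * ξ ω (B i) = f ω s * (u i ω * ξ ω (B i)) :=
            fun i => by ring
          rw [tsum_congr h4, ENNReal.tsum_mul_left]
          split_ifs with h0
          · have hz : ∀ i : ℕ, u i ω * ξ ω (B i) = 0 := by
              intro i
              rw [hudef]
              simp [if_pos h0]
            rw [tsum_congr hz]
            simp
          · rw [hsum_u ω h0]
      _ = ∫⁻ s, ∫⁻ ω, f ω s ∂Q s ∂ν := by
          refine lintegral_congr_ae ?_
          filter_upwards [hQ0] with s hQs
          refine lintegral_congr_ae ?_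
          have hae : ∀ᵐ ω ∂Q s, ¬ ξ ω = 0 := by
            rw [ae_iff]
            have he : {ω | ¬ ¬ ξ ω = 0} = {ω | ξ ω = 0} := by ext ω; simp
            rw [he]
            exact hQs
          filter_upwards [hae] with ω hω
          rw [if_neg (fun hz => hω ((hc0 ω).mp hz)), mul_one]
  -- σ-finiteness of P
  set φ : Ω → ℝ≥0∞ := fun ω => ∫⁻ t, h (ω, t) ∂ξ ω with hφdef
  have hhm' : Measurable (fun p : Ω × S => h (p.1, p.2)) :=
    hhm.comp (measurable_fst.prodMk measurable_snd)
  have hφm : Measurable φ := hlint (fun ω t => h (ω, t)) hhm'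
  have hφint : ∫⁻ ω, φ ω ∂P < ⊤ := by
    rw [hφdef]
    rw [key (fun ω t => h (ω, t)) hhm']
    exact hhint
  have hc0meas : MeasurableSet {ω | c ω = 0} := hmeasc (measurableSet_singleton 0)
  have hP_c0 : P {ω | c ω = 0} = 0 := by
    rw [hPdef, Measure.sum_apply _ hc0meas]
    refine ENNReal.tsum_eq_zero.mpr fun i => ?_
    rw [Measure.bind_apply hc0meas (hQu i).aemeasurable]
    have hwd : ∀ s, (Q s).withDensity (u i) {ω | c ω = 0} = 0 := by
      intro s
      rw [withDensity_apply _ hc0meas]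
      have hz : ∀ ω ∈ {ω | c ω = 0}, u i ω = (fun _ => (0 : ℝ≥0∞)) ω := by
        intro ω hω
        rw [hudef]
        simp only
        rw [if_pos (show c ω = 0 from hω), mul_zero]
      rw [setLIntegral_congr_fun hc0meas hz, lintegral_zero]
    simp [hwd]
  have hφ0 : {ω | φ ω = 0} ⊆ {ω | c ω = 0} := by
    intro ω hω
    have hξ0 : ξ ω = 0 := by
      have h1 : (fun t => h (ω, t)) =ᵐ[ξ ω] 0 :=
        (lintegral_eq_zero_iff (hhm.comp (measurable_prodMk_left))).mp hω
      have h2 : ξ ω {t | ¬ h (ω, t) = 0} = 0 := h1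
      have h3 : {t : S | ¬ h (ω, t) = 0} = Set.univ :=
        Set.eq_univ_of_forall fun t => (hhpos (ω, t)).ne'
      rw [h3] at h2
      exact Measure.measure_univ_eq_zero.mp h2
    exact (hc0 ω).mpr hξ0
  have hPφ0 : P {ω | φ ω = 0} = 0 := measure_mono_null hφ0 hP_c0
  have hPsig : SigmaFinite P := by
    refine ⟨⟨⟨fun n => {ω | φ ω = 0} ∪ {ω | ((n : ℝ≥0∞) + 1)⁻¹ ≤ φ ω},
      fun n => trivial, fun n => ?_, ?_⟩⟩⟩
    · refine (measure_union_le _ _).trans_lt ?_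
      rw [hPφ0, zero_add]
      have h2 := mul_meas_ge_le_lintegral₀ (μ := P) hφm.aemeasurable ((n : ℝ≥0∞) + 1)⁻¹
      calc P {ω | ((n : ℝ≥0∞) + 1)⁻¹ ≤ φ ω}
          = ((n : ℝ≥0∞) + 1) * (((n : ℝ≥0∞) + 1)⁻¹ * P {ω | ((n : ℝ≥0∞) + 1)⁻¹ ≤ φ ω}) := by
            rw [← mul_assoc, ENNReal.mul_inv_cancel (by simp) (by simp), one_mul]
        _ ≤ ((n : ℝ≥0∞) + 1) * ∫⁻ ω, φ ω ∂P := mul_le_mul_right h2 _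
        _ < ⊤ := ENNReal.mul_lt_top (by simp) hφint
    · refine Set.eq_univ_of_forall fun ω => ?_
      rcases eq_or_ne (φ ω) 0 with h0 | hne
      · exact Set.mem_iUnion.mpr ⟨0, Or.inl h0⟩
      · obtain ⟨n, hn⟩ := ENNReal.exists_inv_nat_lt hne
        refine Set.mem_iUnion.mpr ⟨n, Or.inr ?_⟩
        refine le_trans ?_ hn.le
        exact ENNReal.inv_le_inv.mpr le_self_add
  exact ⟨P, hPsig, fun f hf => (key f hf).symm⟩
end
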